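/- Let X be an n×L indicator matrix, Y ∈ {0,1}ⁿ, and λ > 0. If (μ̂, β̂) ∈ ℝ × ℝᴸ minimizes the logistic-loss objective (μ, β) ↦ −[Yᵀ(μ·1 + Xβ) − ∑ₖ₌₁ⁿ log(1 + exp((μ·1 + Xβ)ₖ))] + λ‖β‖₂, then the mean of the entries of β̂ is zero, i.e. ∑ᵢ₌₁ᴸ β̂ᵢ = 0. -/

import Mathlib

open scoped BigOperators

/-- If `(μhat, βhat)` minimizes the logistic-loss group-lasso objective
`(μ, β) ↦ −[Yᵀ(μ·1 + Xβ) − ∑ₖ log(1 + exp((μ·1 + Xβ)ₖ))] + λ‖β‖₂` where `X` is an `n×L`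
indicator matrix, `Y ∈ {0,1}ⁿ` and `λ > 0`, then the entries of `βhat` sum to zero. -/
theorem stmt_1 (n L : ℕ) (X : Matrix (Fin n) (Fin L) ℝ)
    (hX : ∀ k : Fin n, ∃ i : Fin L, ∀ j : Fin L, X k j = if j = i then (1 : ℝ) else 0)
    (Y : Fin n → ℝ) (hY : ∀ k, Y k = 0 ∨ Y k = 1)
    (lam : ℝ) (hlam : 0 < lam)
    (μhat : ℝ) (βhat : Fin L → ℝ)
    (hmin : ∀ (μ : ℝ) (β : Fin L → ℝ),
      -((∑ k, Y k * (μhat + X.mulVec βhat k))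
            - ∑ k, Real.log (1 + Real.exp (μhat + X.mulVec βhat k)))
          + lam * Real.sqrt (∑ i, βhat i ^ 2) ≤
        -((∑ k, Y k * (μ + X.mulVec β k))
            - ∑ k, Real.log (1 + Real.exp (μ + X.mulVec β k)))
          + lam * Real.sqrt (∑ i, β i ^ 2)) :
    ∑ i, βhat i = 0 := by
  rcases Nat.eq_zero_or_pos L with hL | hL
  · subst hL; simp
  set c : ℝ := (∑ i, βhat i) / L with hc
  have hsum : ∑ i, βhat i = L * c := by
    have hL0 : (L:ℝ) ≠ 0 := by positivity
    rw [hc]; field_simp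
  -- the shifted candidate
  have key := hmin (μhat + c) (fun i => βhat i - c)
  have hpred : ∀ k, (μhat + c) + X.mulVec (fun i => βhat i - c) k
      = μhat + X.mulVec βhat k := by
    intro k
    obtain ⟨i, hi⟩ := hX k
    have h1 : X.mulVec (fun i => βhat i - c) k = βhat i - c := by
      simp only [Matrix.mulVec, dotProduct]
      rw [Finset.sum_eq_single i]
      · rw [hi i]; simp
      · intro j _ hj; rw [hi j]; simp [hj]
      · intro h; exact absurd (Finset.mem_univ i) h
    have h2 : X.mulVec βhat k = βhat i := by
      simp only [Matrix.mulVec, dotProduct]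
      rw [Finset.sum_eq_single i]
      · rw [hi i]; simp
      · intro j _ hj; rw [hi j]; simp [hj]
      · intro h; exact absurd (Finset.mem_univ i) h
    rw [h1, h2]; ring
  simp only [hpred] at key
  have hsqrt : Real.sqrt (∑ i, βhat i ^ 2)
      ≤ Real.sqrt (∑ i, (βhat i - c) ^ 2) := by
    have := key
    nlinarith [Real.sqrt_nonneg (∑ i, βhat i ^ 2),
      Real.sqrt_nonneg (∑ i, (βhat i - c) ^ 2)]
  have hA : (0:ℝ) ≤ ∑ i, βhat i ^ 2 :=
    Finset.sum_nonneg fun i _ => sq_nonneg _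
  have hle : ∑ i, βhat i ^ 2 ≤ ∑ i, (βhat i - c) ^ 2 := by
    calc ∑ i, βhat i ^ 2 = Real.sqrt (∑ i, βhat i ^ 2) ^ 2 := (Real.sq_sqrt hA).symm
      _ ≤ Real.sqrt (∑ i, (βhat i - c) ^ 2) ^ 2 := by
          apply pow_le_pow_left₀ (Real.sqrt_nonneg _) hsqrt
      _ = ∑ i, (βhat i - c) ^ 2 := Real.sq_sqrt (by positivity)
  have hexp : ∑ i, (βhat i - c) ^ 2
      = ∑ i, βhat i ^ 2 - 2 * c * (∑ i, βhat i) + L * c ^ 2 := by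
    have h : ∀ i : Fin L, (βhat i - c) ^ 2 = βhat i ^ 2 - 2 * c * βhat i + c ^ 2 :=
      fun i => by ring
    simp only [h, Finset.sum_add_distrib, Finset.sum_sub_distrib, ← Finset.mul_sum,
      Finset.sum_const, Finset.card_univ, Fintype.card_fin, nsmul_eq_mul]
  rw [hexp, hsum] at hle
  have hc0 : c = 0 := by
    have hLpos : (0:ℝ) < L := by exact_mod_cast hL
    have h1 : (L:ℝ) * c ^ 2 ≤ 0 := by nlinarith
    have h2 : (0:ℝ) ≤ (L:ℝ) * c ^ 2 := by positivity
    have h3 : (L:ℝ) * c ^ 2 = 0 := le_antisymm h1 h2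
    have h4 : c ^ 2 = 0 := by
      rcases mul_eq_zero.mp h3 with h | h
      · exact absurd h (ne_of_gt hLpos)
      · exact h
    exact pow_eq_zero_iff (by norm_num) |>.mp h4
  rw [hsum, hc0, mul_zero]
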